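/- Let θ be an irrational number in (0,1) with continued fraction convergents p_n/q_n and partial quotients a_n. Then for any integers n ≥ 1, 0 ≤ s ≤ a_{n+1}, and 1 ≤ r ≤ q_n + q_{n-1} - 1, one has ⌊(s q_n + r)θ⌋ = s p_n + ⌊rθ⌋. -/

import Mathlib

/-- The Gauss-map iterates of `θ`: `cfTheta θ 0 = θ` and
`cfTheta θ (n+1) = {1 / cfTheta θ n}` (fractional part), so that
`θ = [0; a₁, a₂, ...]` with `aₙ = ⌊1 / cfTheta θ (n-1)⌋`. -/
noncomputable def cfTheta (θ : ℝ) : ℕ → ℝ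
  | 0 => θ
  | n + 1 => Int.fract (1 / cfTheta θ n)

/-- The `n`-th partial quotient `aₙ` (for `n ≥ 1`) of the continued fraction
expansion `θ = [0; a₁, a₂, ...]` of `θ ∈ (0,1)`. -/
noncomputable def cfA (θ : ℝ) (n : ℕ) : ℤ := ⌊1 / cfTheta θ (n - 1)⌋

/-- Numerators `pₙ` of the convergents of `θ = [0; a₁, a₂, ...]`:
`p₋₁ = 1`, `p₀ = 0`, `p_{n+1} = a_{n+1} pₙ + p_{n-1}`. -/
noncomputable def cfP (θ : ℝ) : ℕ → ℤ
  | 0 => 0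
  | 1 => 1
  | n + 2 => cfA θ (n + 2) * cfP θ (n + 1) + cfP θ n

/-- Denominators `qₙ` of the convergents of `θ = [0; a₁, a₂, ...]`:
`q₋₁ = 0`, `q₀ = 1`, `q_{n+1} = a_{n+1} qₙ + q_{n-1}`. -/
noncomputable def cfQ (θ : ℝ) : ℕ → ℤ
  | 0 => 1
  | 1 => cfA θ 1
  | n + 2 => cfA θ (n + 2) * cfQ θ (n + 1) + cfQ θ n

lemma cfTheta_props (θ : ℝ) (hθ : Irrational θ) (hθ01 : θ ∈ Set.Ioo (0:ℝ) 1) :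
    ∀ k, Irrational (cfTheta θ k) ∧ cfTheta θ k ∈ Set.Ioo (0:ℝ) 1 := by
  intro k
  induction k with
  | zero => exact ⟨hθ, hθ01⟩
  | succ k ih =>
    obtain ⟨h1, h2⟩ := ih
    have hinv : Irrational (1 / cfTheta θ k) := by
      rw [one_div]; exact h1.inv
    have hfr : Irrational (Int.fract (1 / cfTheta θ k)) := by
      rw [Int.fract]; exact hinv.sub_intCast _
    have hfr' : Irrational (cfTheta θ (k+1)) := by
      show Irrational (Int.fract (1 / cfTheta θ k)); exact hfr
    refine ⟨hfr', ?_, ?_⟩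
    · exact lt_of_le_of_ne (Int.fract_nonneg _) (Ne.symm hfr'.ne_zero)
    · exact Int.fract_lt_one _

lemma cfTheta_succ (θ : ℝ) (k : ℕ) :
    cfTheta θ (k+1) = 1 / cfTheta θ k - cfA θ (k+1) := by
  show Int.fract (1 / cfTheta θ k) = _
  rw [Int.fract, cfA]
  norm_num

lemma cfA_pos (θ : ℝ) (hθ : Irrational θ) (hθ01 : θ ∈ Set.Ioo (0:ℝ) 1) (k : ℕ) :
    1 ≤ cfA θ (k+1) := by
  obtain ⟨-, h0, h1⟩ := cfTheta_props θ hθ hθ01 k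
  have : (1:ℝ) ≤ 1 / cfTheta θ k := by
    exact one_le_one_div h0 h1.le
  have hA : cfA θ (k+1) = ⌊1 / cfTheta θ k⌋ := by simp [cfA]
  rw [hA]
  exact Int.le_floor.2 (by exact_mod_cast this)

lemma cfQ_pos (θ : ℝ) (hθ : Irrational θ) (hθ01 : θ ∈ Set.Ioo (0:ℝ) 1) :
    ∀ n, 1 ≤ cfQ θ n := by
  have key : ∀ n, 1 ≤ cfQ θ n ∧ 1 ≤ cfQ θ (n+1) := by
    intro n
    induction n with
    | zero =>
      refine ⟨le_refl _, ?_⟩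
      show (1:ℤ) ≤ cfA θ 1
      exact cfA_pos θ hθ hθ01 0
    | succ n ih =>
      obtain ⟨h1, h2⟩ := ih
      refine ⟨h2, ?_⟩
      show 1 ≤ cfA θ (n + 2) * cfQ θ (n + 1) + cfQ θ n
      have ha := cfA_pos θ hθ hθ01 (n+1)
      nlinarith
  exact fun n => (key n).1

lemma B_eq (θ : ℝ) (hθ : Irrational θ) (hθ01 : θ ∈ Set.Ioo (0:ℝ) 1) :
    ∀ n, (cfQ θ n : ℝ) * θ - cfP θ n
      = (-1)^n * ∏ k ∈ Finset.range (n+1), cfTheta θ k := by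
  have hne : ∀ k, cfTheta θ k ≠ 0 := fun k => (cfTheta_props θ hθ hθ01 k).1.ne_zero
  have key : ∀ n, ((cfQ θ n : ℝ) * θ - cfP θ n
      = (-1)^n * ∏ k ∈ Finset.range (n+1), cfTheta θ k)
    ∧ ((cfQ θ (n+1) : ℝ) * θ - cfP θ (n+1)
      = (-1)^(n+1) * ∏ k ∈ Finset.range (n+2), cfTheta θ k) := by
    intro n
    induction n with
    | zero =>
      constructor
      · show ((1:ℤ):ℝ) * θ - ((0:ℤ):ℝ) = _
        simp [Finset.prod_range_one, cfTheta]
      · show ((cfA θ 1 : ℤ):ℝ) * θ - ((1:ℤ):ℝ) = _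
        have h1 : cfTheta θ 1 = 1 / cfTheta θ 0 - cfA θ 1 := cfTheta_succ θ 0
        have h0 : cfTheta θ 0 = θ := rfl
        have hθ0 : θ ≠ 0 := hθ.ne_zero
        rw [Finset.prod_range_succ, Finset.prod_range_one, h1, h0]
        field_simp
        ring
    | succ n ih =>
      obtain ⟨h1, h2⟩ := ih
      refine ⟨h2, ?_⟩
      have hrec : ((cfQ θ (n+2) : ℝ) * θ - cfP θ (n+2))
          = (cfA θ (n+2) : ℝ) * ((cfQ θ (n+1) : ℝ) * θ - cfP θ (n+1))
            + ((cfQ θ n : ℝ) * θ - cfP θ n) := by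
        show ((cfA θ (n + 2) * cfQ θ (n + 1) + cfQ θ n : ℤ) : ℝ) * θ
            - ((cfA θ (n + 2) * cfP θ (n + 1) + cfP θ n : ℤ) : ℝ) = _
        push_cast
        ring
      have hth : cfTheta θ (n+1) * cfTheta θ (n+2)
          = 1 - (cfA θ (n+2) : ℝ) * cfTheta θ (n+1) := by
        rw [cfTheta_succ θ (n+1)]
        field_simp [hne (n+1)]
      have hP2 : (∏ k ∈ Finset.range (n+1+1), cfTheta θ k)
          = (∏ k ∈ Finset.range (n+1), cfTheta θ k) * cfTheta θ (n+1) :=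
        Finset.prod_range_succ _ _
      have hP3 : (∏ k ∈ Finset.range (n+1+1+1), cfTheta θ k)
          = (∏ k ∈ Finset.range (n+1+1), cfTheta θ k) * cfTheta θ (n+2) :=
        Finset.prod_range_succ _ _
      have e1 : (-1:ℝ)^(n+1) = -(-1)^n := by ring
      have e2 : (-1:ℝ)^(n+1+1) = (-1)^n := by ring
      rw [hrec, h1, h2, hP3, hP2, e1, e2]
      linear_combination (-(-1:ℝ)^n * ∏ k ∈ Finset.range (n+1), cfTheta θ k) * hth
  exact fun n => (key n).1

lemma B_sign (θ : ℝ) (hθ : Irrational θ) (hθ01 : θ ∈ Set.Ioo (0:ℝ) 1) (n : ℕ) :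
    0 < (-1:ℝ)^n * ((cfQ θ n : ℝ) * θ - cfP θ n) := by
  rw [B_eq θ hθ hθ01 n, ← mul_assoc, ← pow_add]
  have : (-1:ℝ)^(n+n) = 1 := by
    rw [← two_mul, pow_mul]; norm_num
  rw [this, one_mul]
  exact Finset.prod_pos fun k _ => (cfTheta_props θ hθ hθ01 k).2.1

lemma cf_det (θ : ℝ) : ∀ n, cfP θ (n+1) * cfQ θ n - cfP θ n * cfQ θ (n+1) = (-1)^n := by
  intro n
  induction n with
  | zero =>
    show cfP θ 1 * cfQ θ 0 - cfP θ 0 * cfQ θ 1 = 1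
    show (1:ℤ) * 1 - 0 * cfA θ 1 = 1
    ring
  | succ n ih =>
    show (cfA θ (n + 2) * cfP θ (n + 1) + cfP θ n) * cfQ θ (n+1)
        - cfP θ (n+1) * (cfA θ (n + 2) * cfQ θ (n + 1) + cfQ θ n) = (-1)^(n+1)
    rw [pow_succ]
    linear_combination (-1 : ℤ) * ih

/-- For `θ ∈ (0,1)` irrational with partial quotients `aₙ` and convergents
`pₙ/qₙ`: for `n ≥ 1`, `0 ≤ s ≤ a_{n+1}` and `1 ≤ r ≤ qₙ + q_{n-1} - 1`,
one has `⌊(s qₙ + r)θ⌋ = s pₙ + ⌊rθ⌋`. -/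
lemma keyL (θ : ℝ) (hθ : Irrational θ) (hθ01 : θ ∈ Set.Ioo (0:ℝ) 1) (k : ℕ)
    (r m : ℤ) (hr1 : 1 ≤ r) (hr2 : r ≤ cfQ θ (k+1) + cfQ θ k - 1)
    (hpos : 0 < (-1:ℝ)^k * ((r:ℝ) * θ - m)) :
    (-1:ℝ)^k * ((cfQ θ k : ℝ) * θ - cfP θ k) ≤ (-1:ℝ)^k * ((r:ℝ) * θ - m) := by
  by_contra hlt
  push_neg at hlt
  set ε : ℤ := (-1)^k with hε
  have hε2 : ε * ε = 1 := by
    rw [hε, ← pow_add, ← two_mul, pow_mul]; norm_num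
  have hdet : cfP θ (k+1) * cfQ θ k - cfP θ k * cfQ θ (k+1) = ε := cf_det θ k
  set x : ℤ := ε * (r * cfP θ (k+1) - m * cfQ θ (k+1)) with hxdef
  set y : ℤ := ε * (m * cfQ θ k - r * cfP θ k) with hydef
  have hx : x * cfQ θ k + y * cfQ θ (k+1) = r := by
    rw [hxdef, hydef]; linear_combination (ε * r) * hdet + r * hε2
  have hm : x * cfP θ k + y * cfP θ (k+1) = m := by
    rw [hxdef, hydef]; linear_combination (ε * m) * hdet + m * hε2
  have hreal : (r:ℝ) * θ - m
      = (x:ℝ) * ((cfQ θ k : ℝ) * θ - cfP θ k)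
        + (y:ℝ) * ((cfQ θ (k+1):ℝ) * θ - cfP θ (k+1)) := by
    have hx' : ((x:ℝ) * cfQ θ k + (y:ℝ) * cfQ θ (k+1)) = (r:ℝ) := by exact_mod_cast hx
    have hm' : ((x:ℝ) * cfP θ k + (y:ℝ) * cfP θ (k+1)) = (m:ℝ) := by exact_mod_cast hm
    rw [← hx', ← hm']; ring
  set u : ℝ := (-1:ℝ)^k * ((cfQ θ k : ℝ) * θ - cfP θ k) with hu
  set v : ℝ := (-1:ℝ)^(k+1) * ((cfQ θ (k+1) : ℝ) * θ - cfP θ (k+1)) with hv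
  have hupos : 0 < u := B_sign θ hθ hθ01 k
  have hvpos : 0 < v := B_sign θ hθ hθ01 (k+1)
  have hxy : (-1:ℝ)^k * ((r:ℝ)*θ - m) = (x:ℝ) * u - (y:ℝ) * v := by
    rw [hu, hv, hreal]; ring
  rw [hxy] at hpos hlt
  have hq1 : 1 ≤ cfQ θ k := cfQ_pos θ hθ hθ01 k
  have hq2 : 1 ≤ cfQ θ (k+1) := cfQ_pos θ hθ hθ01 (k+1)
  rcases le_or_gt y 0 with hy | hy
  · have hyr : (y:ℝ) ≤ 0 := by exact_mod_cast hy
    have hxr : (x:ℝ) < 1 := by nlinarith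
    have hx0 : x ≤ 0 := by
      have : x < 1 := by exact_mod_cast hxr
      omega
    nlinarith [hx, hq1, hq2, hr1, hx0, hy]
  · have hy1 : 1 ≤ y := hy
    have hx1 : 1 ≤ x := by
      by_contra h
      push_neg at h
      have hx0 : (x:ℝ) ≤ 0 := by exact_mod_cast (by omega : x ≤ 0)
      have hyr : (1:ℝ) ≤ (y:ℝ) := by exact_mod_cast hy1
      nlinarith
    nlinarith [hx, hr2, hq1, hq2, hx1, hy1]

theorem floor_s_qn_add (θ : ℝ) (hθ : Irrational θ) (hθ01 : θ ∈ Set.Ioo (0:ℝ) 1)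
    (n : ℕ) (hn : 1 ≤ n) (s : ℤ) (hs0 : 0 ≤ s) (hs1 : s ≤ cfA θ (n + 1))
    (r : ℤ) (hr1 : 1 ≤ r) (hr2 : r ≤ cfQ θ n + cfQ θ (n - 1) - 1) :
    ⌊((s * cfQ θ n + r : ℤ) : ℝ) * θ⌋ = s * cfP θ n + ⌊(r : ℝ) * θ⌋ := by
  obtain ⟨k, rfl⟩ : ∃ k, n = k + 1 := ⟨n - 1, (Nat.succ_pred_eq_of_pos hn).symm⟩
  have hsub : (k + 1) - 1 = k := rfl
  rw [hsub] at hr2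
  have hA2 : cfA θ (k + 1 + 1) = cfA θ (k + 2) := rfl
  rw [hA2] at hs1
  set β := (cfQ θ (k+1) : ℝ) * θ - cfP θ (k+1) with hβ
  set Bk := (cfQ θ k : ℝ) * θ - cfP θ k with hBk
  have hrec : (cfQ θ (k+2) : ℝ) * θ - cfP θ (k+2) = (cfA θ (k+2) : ℝ) * β + Bk := by
    show ((cfA θ (k + 2) * cfQ θ (k + 1) + cfQ θ k : ℤ):ℝ) * θ
        - ((cfA θ (k + 2) * cfP θ (k + 1) + cfP θ k : ℤ):ℝ) = _
    push_cast
    rw [hβ, hBk]; ring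
  have hrθ : Irrational ((r:ℝ) * θ) := by
    have : Irrational (((r:ℤ):ℝ) * θ) := hθ.intCast_mul (by omega)
    exact_mod_cast this
  have hfr0 : 0 < Int.fract ((r:ℝ)*θ) := by
    refine lt_of_le_of_ne (Int.fract_nonneg _) (fun h => ?_)
    have h' : (r:ℝ)*θ - ⌊(r:ℝ)*θ⌋ = 0 := by rw [Int.self_sub_floor, ← h]
    exact hrθ.ne_int ⌊(r:ℝ)*θ⌋ (by linarith)
  have hfr1 : Int.fract ((r:ℝ)*θ) < 1 := Int.fract_lt_one _
  have hfloor : (r:ℝ)*θ - ⌊(r:ℝ)*θ⌋ = Int.fract ((r:ℝ)*θ) := Int.self_sub_floor _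
  have hs0' : (0:ℝ) ≤ (s:ℝ) := by exact_mod_cast hs0
  have hs1' : (s:ℝ) ≤ (cfA θ (k+2) : ℝ) := by exact_mod_cast hs1
  have key : 0 ≤ Int.fract ((r:ℝ)*θ) + s * β ∧ Int.fract ((r:ℝ)*θ) + s * β < 1 := by
    rcases Nat.even_or_odd k with hk | hk
    · -- k even : β < 0
      have e1 : (-1:ℝ)^k = 1 := hk.neg_one_pow
      have e2 : (-1:ℝ)^(k+1) = -1 := by rw [pow_succ, e1]; ring
      have e3 : (-1:ℝ)^(k+2) = 1 := by rw [pow_succ, e2]; ring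
      have hBkpos : 0 < Bk := by
        have := B_sign θ hθ hθ01 k; rwa [e1, one_mul] at this
      have hβneg : β < 0 := by
        have := B_sign θ hθ hθ01 (k+1); rw [e2] at this; linarith
      have hB2pos : 0 < (cfQ θ (k+2) : ℝ) * θ - cfP θ (k+2) := by
        have := B_sign θ hθ hθ01 (k+2); rwa [e3, one_mul] at this
      have haβ : (cfA θ (k+2) : ℝ) * (-β) < Bk := by
        rw [hrec] at hB2pos; linarith
      have hkey := keyL θ hθ hθ01 k r ⌊(r:ℝ)*θ⌋ hr1 hr2
        (by rw [e1, one_mul, hfloor]; exact hfr0)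
      rw [e1, one_mul, one_mul, hfloor] at hkey
      constructor
      · nlinarith [mul_nonneg (sub_nonneg.2 hs1') (by linarith : (0:ℝ) ≤ -β)]
      · nlinarith [mul_nonneg hs0' (by linarith : (0:ℝ) ≤ -β)]
    · -- k odd : β > 0
      have e1 : (-1:ℝ)^k = -1 := hk.neg_one_pow
      have e2 : (-1:ℝ)^(k+1) = 1 := by rw [pow_succ, e1]; ring
      have e3 : (-1:ℝ)^(k+2) = -1 := by rw [pow_succ, e2]; ring
      have hBkneg : Bk < 0 := by
        have := B_sign θ hθ hθ01 k; rw [e1] at this; linarith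
      have hβpos : 0 < β := by
        have := B_sign θ hθ hθ01 (k+1); rwa [e2, one_mul] at this
      have hB2neg : (cfQ θ (k+2) : ℝ) * θ - cfP θ (k+2) < 0 := by
        have := B_sign θ hθ hθ01 (k+2); rw [e3] at this; linarith
      have haβ : (cfA θ (k+2) : ℝ) * β < -Bk := by
        rw [hrec] at hB2neg; linarith
      have hkey := keyL θ hθ hθ01 k r (⌊(r:ℝ)*θ⌋ + 1) hr1 hr2
        (by rw [e1]; push_cast; nlinarith [hfloor, hfr1])
      rw [e1] at hkey
      push_cast at hkey
      have hkey' : -Bk ≤ 1 - Int.fract ((r:ℝ)*θ) := by nlinarith [hfloor]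
      constructor
      · nlinarith [mul_nonneg hs0' hβpos.le]
      · nlinarith [mul_nonneg (sub_nonneg.2 hs1') hβpos.le]
  obtain ⟨klo, khi⟩ := key
  have hcast : ((s * cfQ θ (k+1) + r : ℤ) : ℝ) * θ
      = ((s * cfP θ (k+1) : ℤ) : ℝ) + ((r:ℝ)*θ + (s:ℝ) * β) := by
    push_cast
    rw [hβ]; ring
  rw [hcast, Int.floor_intCast_add]
  congr 1
  rw [Int.floor_eq_iff]
  constructor
  · linarith [hfloor]
  · linarith [hfloor]
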